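/- Let X and X' be real N×R matrices all of whose rows are nonzero. Then ‖D(X) − D(X')‖_F ≤ ‖X − X'‖_F · ‖D(X)·D(X')‖_F. -/

import Mathlib

open Finset Matrix

/-- Euclidean norm of a row vector in `ℝ^R`. -/
noncomputable def rowNorm {R : ℕ} (v : Fin R → ℝ) : ℝ :=
  Real.sqrt (∑ r, v r ^ 2)

/-- `D(X)`: the `N × N` diagonal matrix whose `n`-th diagonal entry is the
reciprocal of the Euclidean norm of the `n`-th row of `X`. -/
noncomputable def Dmat {N R : ℕ} (X : Matrix (Fin N) (Fin R) ℝ) :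
    Matrix (Fin N) (Fin N) ℝ :=
  Matrix.diagonal fun n => (rowNorm (X n))⁻¹

/-- The Frobenius norm of a real matrix. -/
noncomputable def frob {m n : Type*} [Fintype m] [Fintype n]
    (M : Matrix m n ℝ) : ℝ :=
  Real.sqrt (∑ i, ∑ j, (M i j) ^ 2)

lemma rowNorm_eq_norm {R : ℕ} (v : Fin R → ℝ) :
    rowNorm v = ‖(WithLp.equiv 2 (Fin R → ℝ)).symm v‖ := by
  simp [rowNorm, EuclideanSpace.norm_eq, Real.norm_eq_abs, sq_abs]

lemma rowNorm_pos {R : ℕ} {v : Fin R → ℝ} (hv : v ≠ 0) : 0 < rowNorm v := by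
  rw [rowNorm_eq_norm]
  rw [norm_pos_iff]
  simpa using hv

lemma abs_rowNorm_sub {R : ℕ} (u v : Fin R → ℝ) :
    |rowNorm u - rowNorm v| ≤ rowNorm (u - v) := by
  simp only [rowNorm_eq_norm, WithLp.equiv_symm_apply, WithLp.toLp_sub]
  exact abs_norm_sub_norm_le _ _

lemma frob_diagonal {N : ℕ} (d : Fin N → ℝ) :
    frob (Matrix.diagonal d) = Real.sqrt (∑ n, d n ^ 2) := by
  unfold frob
  congr 1
  refine Finset.sum_congr rfl fun i _ => ?_
  rw [Finset.sum_eq_single i]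
  · simp
  · intro j _ hj; simp [Matrix.diagonal_apply_ne' _ hj]
  · simp

lemma row_le_frob {N R : ℕ} (M : Matrix (Fin N) (Fin R) ℝ) (n : Fin N) :
    rowNorm (M n) ≤ frob M := by
  unfold rowNorm frob
  apply Real.sqrt_le_sqrt
  exact Finset.single_le_sum (f := fun i => ∑ r, (M i r) ^ 2)
    (fun i _ => Finset.sum_nonneg fun r _ => sq_nonneg _) (Finset.mem_univ n)

theorem atd_diagonal_rescaling_lipschitz
    {N R : ℕ} (X X' : Matrix (Fin N) (Fin R) ℝ)
    (hX : ∀ n, X n ≠ 0) (hX' : ∀ n, X' n ≠ 0) :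
    frob (Dmat X - Dmat X') ≤ frob (X - X') * frob (Dmat X * Dmat X') := by
  set K := frob (X - X') with hK
  have hK0 : 0 ≤ K := Real.sqrt_nonneg _
  have hsub : Dmat X - Dmat X' =
      Matrix.diagonal (fun n => (rowNorm (X n))⁻¹ - (rowNorm (X' n))⁻¹) := by
    simp [Dmat, Matrix.diagonal_sub]
  have hmul : Dmat X * Dmat X' =
      Matrix.diagonal (fun n => (rowNorm (X n))⁻¹ * (rowNorm (X' n))⁻¹) := by
    simp [Dmat, Matrix.diagonal_mul_diagonal]
  rw [hsub, hmul, frob_diagonal, frob_diagonal]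
  rw [← Real.sqrt_sq hK0, ← Real.sqrt_mul (sq_nonneg K)]
  apply Real.sqrt_le_sqrt
  rw [Finset.mul_sum]
  refine Finset.sum_le_sum fun n _ => ?_
  have ha : 0 < rowNorm (X n) := rowNorm_pos (hX n)
  have hb : 0 < rowNorm (X' n) := rowNorm_pos (hX' n)
  set a := rowNorm (X n)
  set b := rowNorm (X' n)
  have habs : |b - a| ≤ K := by
    have := abs_rowNorm_sub (X' n) (X n)
    have h2 : rowNorm (X' n - X n) ≤ K := by
      have heq : rowNorm (X' n - X n) = rowNorm ((X - X') n) := by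
        unfold rowNorm; congr 1
        refine Finset.sum_congr rfl fun r _ => ?_
        simp only [Pi.sub_apply, Matrix.sub_apply]; ring
      rw [heq]; exact row_le_frob _ n
    exact le_trans this h2
  have key : a⁻¹ - b⁻¹ = (b - a) * (a⁻¹ * b⁻¹) := by
    field_simp
  rw [key, mul_pow]
  apply mul_le_mul_of_nonneg_right _ (sq_nonneg _)
  calc (b - a) ^ 2 = |b - a| ^ 2 := (sq_abs _).symm
    _ ≤ K ^ 2 := pow_le_pow_left₀ (abs_nonneg _) habs 2
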